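/- Let f(w) = (1/2)⟨w, Aw⟩ − ⟨b, w⟩ + c be a quadratic function on ℝⁿ with A symmetric positive definite, smallest eigenvalue λ₁, largest eigenvalue λₙ, and unique minimizer x* = A⁻¹b. Let (xᵏ)ₖ≥₀ be a sequence in ℝⁿ such that for every k: if ∇f(xᵏ) = 0 then xᵏ⁺¹ = xᵏ, and if ∇f(xᵏ) ≠ 0 then f(xᵏ⁺¹) ≤ f(xᵏ − t*ₖ·∇f(xᵏ)) where t*ₖ := ‖∇f(xᵏ)‖²/⟨∇f(xᵏ), A∇f(xᵏ)⟩ (this holds for the iterates of the Method of Ellipcenters, since each iterate minimizes f on an affine plane containing the optimal-step gradient point). Then with η := 1 − λ₁/λₙ ∈ [0,1), for all k ≥ 0, f(xᵏ) − f(x*) ≤ ηᵏ · (f(x⁰) − f(x*)). -/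

import Mathlib

open Matrix

variable {n : ℕ}

lemma dp_sum (v : Fin n → ℝ) (w : Fin n → Fin n → ℝ) :
    v ⬝ᵥ (∑ i, w i) = ∑ i, v ⬝ᵥ w i := by
  simp only [dotProduct, Finset.sum_apply, Finset.mul_sum]
  exact Finset.sum_comm

lemma dot_eig {A : Matrix (Fin n) (Fin n) ℝ} (hA : A.IsHermitian)
    (M : Matrix (Fin n) (Fin n) ℝ) (μ : Fin n → ℝ)
    (hM : ∀ i, M *ᵥ ⇑(hA.eigenvectorBasis i) = μ i • ⇑(hA.eigenvectorBasis i))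
    (v : Fin n → ℝ) :
    v ⬝ᵥ M *ᵥ v = ∑ i, μ i * (⇑(hA.eigenvectorBasis i) ⬝ᵥ v) ^ 2 := by
  set B := hA.eigenvectorBasis with hB
  have hv : (∑ i, (⇑(B i) ⬝ᵥ v) • ⇑(B i)) = v := by
    have h := congrArg WithLp.ofLp (B.sum_repr' (WithLp.toLp 2 v))
    have h2 : ∀ i, (inner ℝ (B i) (WithLp.toLp 2 v) : ℝ) = ⇑(B i) ⬝ᵥ v := by
      intro i
      simp [PiLp.inner_apply, dotProduct, RCLike.inner_apply, mul_comm]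
    simp only [h2, WithLp.ofLp_sum, WithLp.ofLp_smul, WithLp.ofLp_toLp] at h
    exact h
  have hMv : M *ᵥ v = ∑ i, ((⇑(B i) ⬝ᵥ v) * μ i) • ⇑(B i) := by
    conv_lhs => rw [← hv]
    rw [show M *ᵥ (∑ i, (⇑(B i) ⬝ᵥ v) • ⇑(B i)) = M.mulVecLin (∑ i, (⇑(B i) ⬝ᵥ v) • ⇑(B i)) from rfl,
      map_sum]
    refine Finset.sum_congr rfl fun i _ => ?_
    rw [LinearMap.map_smul, show M.mulVecLin ⇑(B i) = M *ᵥ ⇑(B i) from rfl, hM i, smul_smul]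
  rw [hMv, dp_sum]
  refine Finset.sum_congr rfl fun i _ => ?_
  rw [dotProduct_smul, dotProduct_comm, smul_eq_mul]
  ring

/-- For any sequence `(xᵏ)` such that `xᵏ⁺¹ = xᵏ` whenever
`∇f(xᵏ) = 0`, and `f(xᵏ⁺¹) ≤ f(xᵏ − t*ₖ ∇f(xᵏ))` (with `t*ₖ` the optimal step)
whenever `∇f(xᵏ) ≠ 0`, the rate `η := 1 − λ₁/λₙ` lies in `[0, 1)` and
`f(xᵏ) − f(x*) ≤ ηᵏ (f(x⁰) − f(x*))` for all `k ≥ 0`. -/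
theorem stmt8 {n : ℕ} (A : Matrix (Fin n) (Fin n) ℝ) (hA : A.PosDef)
    (lam1 lamn : ℝ)
    (hlam1 : IsLeast (Set.range hA.1.eigenvalues) lam1)
    (hlamn : IsGreatest (Set.range hA.1.eigenvalues) lamn)
    (b : Fin n → ℝ) (c : ℝ) (f : (Fin n → ℝ) → ℝ)
    (hf : ∀ w, f w = (1/2) * (w ⬝ᵥ A.mulVec w) - b ⬝ᵥ w + c)
    (xstar : Fin n → ℝ) (hxstar : xstar = A⁻¹.mulVec b)
    (x : ℕ → Fin n → ℝ)
    (hstep0 : ∀ k, A.mulVec (x k) - b = 0 → x (k + 1) = x k)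
    (hstep : ∀ k, A.mulVec (x k) - b ≠ 0 →
      f (x (k + 1)) ≤
        f (x k - (((A.mulVec (x k) - b) ⬝ᵥ (A.mulVec (x k) - b)) /
            ((A.mulVec (x k) - b) ⬝ᵥ A.mulVec (A.mulVec (x k) - b))) • (A.mulVec (x k) - b)))
    (η : ℝ) (hη : η = 1 - lam1 / lamn) :
    η ∈ Set.Ico (0 : ℝ) 1 ∧
      ∀ k : ℕ, f (x k) - f xstar ≤ η ^ k * (f (x 0) - f xstar) := by
  have hdet : IsUnit A.det := hA.det_pos.ne'.isUnit
  have hATA : A⁻¹ * A = 1 := nonsing_inv_mul A hdet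
  have hAAT : A * A⁻¹ = 1 := mul_nonsing_inv A hdet
  have hevpos : ∀ i, 0 < hA.1.eigenvalues i := hA.eigenvalues_pos
  -- positivity of lam1, lamn
  have hlam1pos : 0 < lam1 := by
    obtain ⟨i, hi⟩ := hlam1.1
    rw [← hi]; exact hevpos i
  have hlamnpos : 0 < lamn := by
    obtain ⟨i, hi⟩ := hlamn.1
    rw [← hi]; exact hevpos i
  have h1n : lam1 ≤ lamn := hlamn.2 hlam1.1
  -- eigen action of A⁻¹
  have hinveig : ∀ i, A⁻¹ *ᵥ ⇑(hA.1.eigenvectorBasis i) =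
      (hA.1.eigenvalues i)⁻¹ • ⇑(hA.1.eigenvectorBasis i) := by
    intro i
    have h1 : A⁻¹ *ᵥ (A *ᵥ ⇑(hA.1.eigenvectorBasis i)) = ⇑(hA.1.eigenvectorBasis i) := by
      rw [mulVec_mulVec, hATA, one_mulVec]
    rw [hA.1.mulVec_eigenvectorBasis, mulVec_smul] at h1
    have h2 := congrArg (fun z => (hA.1.eigenvalues i)⁻¹ • z) h1
    simpa [smul_smul, inv_mul_cancel₀ (hevpos i).ne'] using h2
  -- Parseval
  have hpar : ∀ v : Fin n → ℝ, v ⬝ᵥ v = ∑ i, (⇑(hA.1.eigenvectorBasis i) ⬝ᵥ v) ^ 2 := by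
    intro v
    have := dot_eig hA.1 1 (fun _ => 1) (fun i => by rw [one_mulVec, one_smul]) v
    rw [one_mulVec] at this
    simpa using this
  have hq := fun v => dot_eig hA.1 A hA.1.eigenvalues hA.1.mulVec_eigenvectorBasis v
  have hqi := fun v => dot_eig hA.1 A⁻¹ (fun i => (hA.1.eigenvalues i)⁻¹) hinveig v
  -- quadratic form bounds
  have hub : ∀ v, v ⬝ᵥ A *ᵥ v ≤ lamn * (v ⬝ᵥ v) := by
    intro v
    rw [hq v, hpar v, Finset.mul_sum]
    exact Finset.sum_le_sum fun i _ =>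
      mul_le_mul_of_nonneg_right (hlamn.2 ⟨i, rfl⟩) (sq_nonneg _)
  have hinvub : ∀ v, v ⬝ᵥ A⁻¹ *ᵥ v ≤ lam1⁻¹ * (v ⬝ᵥ v) := by
    intro v
    rw [hqi v, hpar v, Finset.mul_sum]
    refine Finset.sum_le_sum fun i _ => mul_le_mul_of_nonneg_right ?_ (sq_nonneg _)
    exact inv_anti₀ hlam1pos (hlam1.2 ⟨i, rfl⟩)
  have hinvnn : ∀ v, 0 ≤ v ⬝ᵥ A⁻¹ *ᵥ v := by
    intro v
    rw [hqi v]
    exact Finset.sum_nonneg fun i _ =>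
      mul_nonneg (inv_nonneg.2 (hevpos i).le) (sq_nonneg _)
  have hpos : ∀ v, v ≠ 0 → 0 < v ⬝ᵥ A *ᵥ v := by
    intro v hv
    simpa using hA.dotProduct_mulVec_pos hv
  -- symmetry
  have hAT : Aᵀ = A := by
    rw [← conjTranspose_eq_transpose_of_trivial]; exact hA.1
  have hsym : ∀ u w : Fin n → ℝ, u ⬝ᵥ A *ᵥ w = (A *ᵥ u) ⬝ᵥ w := by
    intro u w
    rw [dotProduct_mulVec]
    congr 1
    rw [← hAT, mulVec_transpose, hAT]
  have hAx : A *ᵥ xstar = b := by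
    rw [hxstar, Matrix.mulVec_mulVec, hAAT, one_mulVec]
  -- difference formula
  have hdiff : ∀ w, f w - f xstar = (1/2) * ((w - xstar) ⬝ᵥ A *ᵥ (w - xstar)) := by
    intro w
    have e1 : xstar ⬝ᵥ A *ᵥ xstar = b ⬝ᵥ xstar := by
      rw [hsym, hAx]
    have e2 : w ⬝ᵥ A *ᵥ xstar = b ⬝ᵥ w := by
      rw [hAx, dotProduct_comm]
    have e3 : xstar ⬝ᵥ A *ᵥ w = b ⬝ᵥ w := by
      rw [hsym, hAx]
    rw [hf w, hf xstar]
    simp only [mulVec_sub, dotProduct_sub, sub_dotProduct]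
    rw [e1, e2, e3]
    ring
  -- key formula : f w - f xstar = 1/2 * g A⁻¹ g
  have hkey : ∀ w, f w - f xstar = (1/2) * ((A *ᵥ w - b) ⬝ᵥ A⁻¹ *ᵥ (A *ᵥ w - b)) := by
    intro w
    have hg : A *ᵥ (w - xstar) = A *ᵥ w - b := by rw [mulVec_sub, hAx]
    have hw : w - xstar = A⁻¹ *ᵥ (A *ᵥ w - b) := by
      rw [← hg, mulVec_mulVec, hATA, one_mulVec]
    rw [hdiff w]
    congr 1
    have h5 : (w - xstar) ⬝ᵥ A *ᵥ (w - xstar) = (A⁻¹ *ᵥ (A *ᵥ w - b)) ⬝ᵥ (A *ᵥ w - b) := by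
      rw [hg]
      rw [show (w - xstar) = A⁻¹ *ᵥ (A *ᵥ w - b) from hw]
    rw [h5, dotProduct_comm]
  -- descent step value
  have habs : ∀ w u : Fin n → ℝ, ∀ t : ℝ, f (w - t • u) =
      f w - t * ((A *ᵥ w - b) ⬝ᵥ u) + t^2/2 * (u ⬝ᵥ A *ᵥ u) := by
    intro w u t
    rw [hf, hf w]
    have e1 : w ⬝ᵥ A *ᵥ u = (A *ᵥ w) ⬝ᵥ u := hsym w u
    have e2 : u ⬝ᵥ A *ᵥ w = (A *ᵥ w) ⬝ᵥ u := dotProduct_comm _ _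
    simp only [mulVec_sub, mulVec_smul, dotProduct_sub, sub_dotProduct, dotProduct_smul,
      smul_dotProduct, smul_eq_mul, e1, e2]
    ring
  -- one-step decrease
  have hmono : ∀ k, f (x (k + 1)) - f xstar ≤ η * (f (x k) - f xstar) := by
    intro k
    by_cases hg : A *ᵥ (x k) - b = 0
    · have hx1 := hstep0 k hg
      have hz : f (x k) - f xstar = 0 := by
        rw [hkey (x k), hg]
        simp
      rw [hx1, hz, mul_zero]
    · set g := A *ᵥ (x k) - b with hgdef
      have hgA : 0 < g ⬝ᵥ A *ᵥ g := hpos g hg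
      have hs : 0 < g ⬝ᵥ g := by nlinarith [hub g, hgA, hlamnpos]
      set s := g ⬝ᵥ g with hsdef
      set a := g ⬝ᵥ A *ᵥ g with hadef
      set q := g ⬝ᵥ A⁻¹ *ᵥ g with hqdef
      have hq0 : 0 ≤ q := hinvnn g
      have hstepk := hstep k hg
      have hval : f (x k - (s / a) • g) = f (x k) - s^2 / (2 * a) := by
        rw [habs (x k) g (s / a), ← hgdef, ← hsdef, ← hadef]
        field_simp
        ring
      have h1 : lam1 * q ≤ s := by
        have h2 := hinvub g
        rw [← hqdef, ← hsdef] at h2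
        have h3 : lam1 * q ≤ lam1 * (lam1⁻¹ * s) :=
          mul_le_mul_of_nonneg_left h2 hlam1pos.le
        rwa [← mul_assoc, mul_inv_cancel₀ hlam1pos.ne', one_mul] at h3
      have hfrac : lam1 / lamn * (q / 2) ≤ s^2 / (2 * a) := by
        rw [div_mul_div_comm, div_le_div_iff₀ (by positivity) (by positivity)]
        have ha_le : a ≤ lamn * s := by
          have := hub g
          rw [← hadef, ← hsdef] at this
          exact this
        nlinarith [mul_le_mul_of_nonneg_right h1 hgA.le, hs, hgA]
      have hDk : f (x k) - f xstar = q / 2 := by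
        rw [hkey (x k), ← hgdef, ← hqdef]; ring
      have hD1 : f (x (k+1)) - f xstar ≤ q / 2 - s^2 / (2 * a) := by
        have := hstepk
        rw [hval] at this
        have h4 : f (x (k+1)) - f xstar ≤ (f (x k) - f xstar) - s^2 / (2*a) := by linarith
        rw [hDk] at h4
        exact h4
      rw [hη, hDk]
      calc f (x (k+1)) - f xstar ≤ q / 2 - s^2 / (2 * a) := hD1
        _ ≤ q / 2 - lam1 / lamn * (q / 2) := by linarith
        _ = (1 - lam1 / lamn) * (q / 2) := by ring
  -- conclusion
  have hη0 : 0 ≤ η := by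
    rw [hη]
    have : lam1 / lamn ≤ 1 := (div_le_one hlamnpos).2 h1n
    linarith
  constructor
  · refine ⟨hη0, ?_⟩
    rw [hη]
    have : 0 < lam1 / lamn := div_pos hlam1pos hlamnpos
    linarith
  · intro k
    induction k with
    | zero => simp
    | succ k ih =>
      calc f (x (k + 1)) - f xstar ≤ η * (f (x k) - f xstar) := hmono k
        _ ≤ η * (η ^ k * (f (x 0) - f xstar)) := mul_le_mul_of_nonneg_left ih hη0
        _ = η ^ (k + 1) * (f (x 0) - f xstar) := by ring
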